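/- The only solution (u,v,w) ∈ ℂ³ of the system (S) with (a,b,c) = (0,0,0) is (u,v,w) = (0,0,0) (the degenerate case a = b = c = 0 gives a unique normal form). -/
import Mathlib


/-- The system (S): with ψ = u³+v³+w³, χ = u³v³+u³w³+v³w³, λ = 216u³v³w³,
the equations ψ² − 12χ = a, ψ⁴ + λψ = b, ψ⁶ − (5/2)λψ³ − (1/8)λ² = c. -/
def sysS (a b c u v w : ℂ) : Prop :=
  (u ^ 3 + v ^ 3 + w ^ 3) ^ 2
      - 12 * (u ^ 3 * v ^ 3 + u ^ 3 * w ^ 3 + v ^ 3 * w ^ 3) = a ∧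
    (u ^ 3 + v ^ 3 + w ^ 3) ^ 4
      + (216 * (u ^ 3 * v ^ 3 * w ^ 3)) * (u ^ 3 + v ^ 3 + w ^ 3) = b ∧
    (u ^ 3 + v ^ 3 + w ^ 3) ^ 6
      - (5 / 2) * (216 * (u ^ 3 * v ^ 3 * w ^ 3)) * (u ^ 3 + v ^ 3 + w ^ 3) ^ 3
      - (1 / 8) * (216 * (u ^ 3 * v ^ 3 * w ^ 3)) ^ 2 = c

/-- the only solution of (S) with (a,b,c) = (0,0,0) is (0,0,0). -/
theorem unique_solution_of_degenerate_system (u v w : ℂ) :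
    sysS 0 0 0 u v w ↔ u = 0 ∧ v = 0 ∧ w = 0 := by
  constructor
  · rintro ⟨h1, h2, h3⟩
    set x := u ^ 3 with hx
    set y := v ^ 3 with hy
    set z := w ^ 3 with hz
    set s := x + y + z with hs
    set L : ℂ := 216 * (x * y * z) with hL
    have hs8 : s ^ 8 = 0 := by
      have h27 : (27 : ℂ) * s ^ 8 = 0 := by
        linear_combination (19 * s ^ 4 + L * s) * h2 + 8 * s ^ 2 * h3
      have := mul_eq_zero.mp h27
      simpa using this
    have hs0 : s = 0 := pow_eq_zero_iff (n := 8) (by norm_num) |>.mp hs8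
    have hL2 : L ^ 2 = 0 := by
      linear_combination (-8 : ℂ) * h3 + (8 * s ^ 5 - 20 * L * s ^ 2) * hs0
    have hL0 : L = 0 := pow_eq_zero_iff (n := 2) (by norm_num) |>.mp hL2
    have hchi : x * y + x * z + y * z = 0 := by
      linear_combination (-(1:ℂ)/12) * h1 + (1/12) * s * hs0
    have hxyz : x * y * z = 0 := by
      linear_combination ((1:ℂ)/216) * hL0
    have hu : u = 0 := by
      have h3z : x ^ 3 = 0 := by
        linear_combination x ^ 2 * hs0 - x * hchi + hxyz
      have := pow_eq_zero_iff (n := 3) (by norm_num) |>.mp h3z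
      rw [hx] at this
      exact pow_eq_zero_iff (n := 3) (by norm_num) |>.mp this
    have hv : v = 0 := by
      have h3z : y ^ 3 = 0 := by
        linear_combination y ^ 2 * hs0 - y * hchi + hxyz
      have := pow_eq_zero_iff (n := 3) (by norm_num) |>.mp h3z
      rw [hy] at this
      exact pow_eq_zero_iff (n := 3) (by norm_num) |>.mp this
    have hw : w = 0 := by
      have h3z : z ^ 3 = 0 := by
        linear_combination z ^ 2 * hs0 - z * hchi + hxyz
      have := pow_eq_zero_iff (n := 3) (by norm_num) |>.mp h3z
      rw [hz] at this
      exact pow_eq_zero_iff (n := 3) (by norm_num) |>.mp this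
    exact ⟨hu, hv, hw⟩
  · rintro ⟨rfl, rfl, rfl⟩
    refine ⟨by ring, by ring, by ring⟩
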